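/- The critical density λ_c = 1.28·λ_u / [(1/r)·log₂(1 + C⁻¹(log((m_d−m_c)/(m_d−m_t)))) − 1] is monotonically increasing in the inference rate r, on the range of r where m_asy(r) < m_t. -/
import Mathlib


noncomputable def C (x : ℝ) : ℝ := Real.sqrt x * Real.arctan (Real.sqrt x)

lemma C_mono {a b : ℝ} (ha : 0 ≤ a) (hab : a ≤ b) : C a ≤ C b := by
  unfold C
  have h1 : Real.sqrt a ≤ Real.sqrt b := Real.sqrt_le_sqrt hab
  have h2 : Real.arctan (Real.sqrt a) ≤ Real.arctan (Real.sqrt b) :=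
    Real.arctan_strictMono.monotone h1
  have h3 : (0:ℝ) ≤ Real.arctan (Real.sqrt a) := by
    rw [← Real.arctan_zero]
    exact Real.arctan_strictMono.monotone (Real.sqrt_nonneg a)
  exact mul_le_mul h1 h2 h3 (Real.sqrt_nonneg b)

theorem critical_density_monotone_in_rate (mc mt md lu : ℝ) (Cinv : ℝ → ℝ)
    (hCinv_left : ∀ x ≥ (0:ℝ), Cinv (C x) = x)
    (hCinv_right : ∀ y ≥ (0:ℝ), C (Cinv y) = y)
    (hm0 : 0 ≤ mc) (h1 : mc < mt) (h2 : mt < md) (hu : 0 < lu) :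
    MonotoneOn (fun r : ℝ =>
        1.28 * lu / ((1 / r) * Real.logb 2 (1 + Cinv (Real.log ((md - mc) / (md - mt)))) - 1))
      {r : ℝ | 0 < r ∧ md - (md - mc) * Real.exp (-(C ((2:ℝ) ^ r - 1))) < mt} := by
  have hdt : (0:ℝ) < md - mt := by linarith
  have hdc : (0:ℝ) < md - mc := by linarith
  have hratio : (1:ℝ) < (md - mc) / (md - mt) := (one_lt_div hdt).mpr (by linarith)
  set y : ℝ := Real.log ((md - mc) / (md - mt)) with hy
  have hy0 : 0 < y := Real.log_pos hratio
  set K : ℝ := Cinv y with hK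
  have hCK : C K = y := hCinv_right y hy0.le
  have hK0 : 0 < K := by
    by_contra h
    push_neg at h
    have hs : Real.sqrt K = 0 := Real.sqrt_eq_zero'.mpr h
    rw [C, hs, zero_mul] at hCK
    linarith
  set L : ℝ := Real.logb 2 (1 + K) with hL
  -- key: for r in the set, r < L
  have key : ∀ r : ℝ, 0 < r → md - (md - mc) * Real.exp (-(C ((2:ℝ) ^ r - 1))) < mt →
      r < L := by
    intro r hr hmem
    set t : ℝ := (2:ℝ) ^ r - 1 with ht
    have ht0 : 0 < t := by
      have : (1:ℝ) < (2:ℝ) ^ r := Real.one_lt_rpow_iff_of_pos (by norm_num) |>.mpr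
        (Or.inl ⟨by norm_num, hr⟩)
      linarith
    -- exp (C t) < ratio
    have hexp : Real.exp (C t) < (md - mc) / (md - mt) := by
      have h5 : md - mt < (md - mc) * Real.exp (-(C t)) := by linarith
      rw [lt_div_iff₀ hdt]
      have := mul_lt_mul_of_pos_right h5 (Real.exp_pos (C t))
      rw [mul_assoc, ← Real.exp_add, neg_add_cancel, Real.exp_zero, mul_one] at this
      linarith
    have hCt : C t < y := (Real.lt_log_iff_exp_lt (by positivity)).mpr hexp
    have htK : t < K := by
      by_contra h
      push_neg at h
      have := C_mono hK0.le h
      rw [hCK] at this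
      linarith
    have h2r : (2:ℝ) ^ r < 1 + K := by linarith
    calc r = Real.logb 2 ((2:ℝ) ^ r) := (Real.logb_rpow (by norm_num) (by norm_num)).symm
      _ < L := Real.logb_lt_logb (by norm_num) (by positivity) h2r
  intro a ha b hb hab
  obtain ⟨ha0, ha1⟩ := ha
  obtain ⟨hb0, hb1⟩ := hb
  have hLa : a < L := key a ha0 ha1
  have hLb : b < L := key b hb0 hb1
  have hL0 : 0 < L := lt_trans ha0 hLa
  simp only
  have hDa : 0 < (1 / a) * L - 1 := by
    rw [one_div, inv_mul_eq_div, sub_pos, lt_div_iff₀ ha0, one_mul]; exact hLa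
  have hDb : 0 < (1 / b) * L - 1 := by
    rw [one_div, inv_mul_eq_div, sub_pos, lt_div_iff₀ hb0, one_mul]; exact hLb
  have hDle : (1 / b) * L - 1 ≤ (1 / a) * L - 1 := by
    have : L / b ≤ L / a := div_le_div_of_nonneg_left hL0.le ha0 hab
    rw [one_div, one_div, inv_mul_eq_div, inv_mul_eq_div]
    linarith
  exact div_le_div_of_nonneg_left (by positivity) hDb hDle
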